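/- For every natural number r ≥ 0, the residue classes of the monomials α^a·β^b with a + b < r form a ℂ-vector-space basis of F̄_r = ℂ[α,β]/J̄_r; in particular dim_ℂ F̄_r = binom(r+1, 2) = r(r+1)/2. -/

import Mathlib

open MvPolynomial

/-- The pair (R̄¹_r, R̄²_r) of polynomials in ℂ[α,β] (α = X 0, β = X 1), defined by
R̄¹_0 = 1, R̄²_0 = 0 and the recursion R̄¹_{r+1} = α·R̄¹_r + r²·R̄²_r,
R̄²_{r+1} = (β + (−1)^{r+1}·8)·R̄¹_r. -/
noncomputable def Rb : ℕ → MvPolynomial (Fin 2) ℂ × MvPolynomial (Fin 2) ℂ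
  | 0 => (1, 0)
  | (r + 1) =>
      (X 0 * (Rb r).1 + C ((r : ℂ) ^ 2) * (Rb r).2,
       (X 1 + C ((-1 : ℂ) ^ (r + 1) * 8)) * (Rb r).1)

/-- The ideal J̄_r = (R̄¹_r, R̄²_r) ⊆ ℂ[α,β]. -/
noncomputable def Jb (r : ℕ) : Ideal (MvPolynomial (Fin 2) ℂ) :=
  Ideal.span {(Rb r).1, (Rb r).2}

namespace Aux

abbrev P2 := MvPolynomial (Fin 2) ℂ

lemma Rb1_succ (r : ℕ) : (Rb (r+1)).1 = X 0 * (Rb r).1 + C ((r : ℂ) ^ 2) * (Rb r).2 := by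
  simp [Rb]

lemma Rb2_succ (r : ℕ) : (Rb (r+1)).2 = (X 1 + C ((-1 : ℂ) ^ (r + 1) * 8)) * (Rb r).1 := by
  simp [Rb]

/-- total degree bounds -/
lemma td_Rb (m : ℕ) : (Rb m).1.totalDegree ≤ m ∧ (Rb m).2.totalDegree ≤ m := by
  induction m with
  | zero => simp [Rb]
  | succ m ih =>
      constructor
      · rw [Rb1_succ]
        refine le_trans (totalDegree_add _ _) ?_
        simp only [max_le_iff]
        constructor
        · refine le_trans (totalDegree_mul _ _) ?_
          have := totalDegree_X (R := ℂ) (0 : Fin 2)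
          omega
        · refine le_trans (totalDegree_mul _ _) ?_
          have := totalDegree_C (σ := Fin 2) ((m : ℂ)^2)
          omega
      · rw [Rb2_succ]
        refine le_trans (totalDegree_mul _ _) ?_
        have h1 : (X 1 + C ((-1 : ℂ) ^ (m + 1) * 8) : P2).totalDegree ≤ 1 := by
          refine le_trans (totalDegree_add _ _) ?_
          rw [max_le_iff]
          exact ⟨by simp [totalDegree_X], by rw [totalDegree_C]; omega⟩
        omega

/-- SDeg n p : p = 0 or totalDegree p < n -/
def SDeg (n : ℕ) (p : P2) : Prop := p = 0 ∨ p.totalDegree < n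

lemma SDeg.add {n : ℕ} {p q : P2} (hp : SDeg n p) (hq : SDeg n q) : SDeg n (p + q) := by
  rcases hp with rfl | hp
  · simpa using hq
  rcases hq with rfl | hq
  · rw [add_zero]; exact Or.inr hp
  right
  exact lt_of_le_of_lt (totalDegree_add _ _) (max_lt hp hq)

lemma SDeg.mul_le {n k : ℕ} {p q : P2} (hp : SDeg n p) (hq : q.totalDegree ≤ k) :
    SDeg (n + k) (p * q) := by
  rcases hp with rfl | hp
  · left; simp
  rcases eq_or_ne (p * q) 0 with h | h
  · left; exact h
  right
  refine lt_of_le_of_lt (totalDegree_mul _ _) ?_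
  omega

lemma SDeg.mono {n n' : ℕ} {p : P2} (h : SDeg n p) (hn : n ≤ n') : SDeg n' p := by
  rcases h with rfl | h
  · exact Or.inl rfl
  · exact Or.inr (lt_of_lt_of_le h hn)

/-- leading-term decomposition of R¹_m -/
lemma Rb1_lead (m : ℕ) : ∃ e : P2, (Rb m).1 = X 0 ^ m + e ∧ SDeg m e := by
  induction m with
  | zero => exact ⟨0, by simp [Rb], Or.inl rfl⟩
  | succ m ih =>
      obtain ⟨e, he, hd⟩ := ih
      refine ⟨X 0 * e + C ((m : ℂ) ^ 2) * (Rb m).2, ?_, ?_⟩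
      · rw [Rb1_succ, he]; ring
      · apply SDeg.add
        · have : SDeg (m + 1) (e * X 0) := SDeg.mul_le hd (by simp [totalDegree_X])
          rwa [mul_comm] at this
        · right
          refine lt_of_le_of_lt (totalDegree_mul _ _) ?_
          have h1 := totalDegree_C (σ := Fin 2) ((m : ℂ)^2)
          have h2 := (td_Rb m).2
          omega

end Aux

namespace Aux

/-- the linear factors -/
noncomputable def w' (i : ℕ) : P2 := X 1 + C ((-1 : ℂ) ^ i * 8)

lemma td_w' (i : ℕ) : (w' i).totalDegree ≤ 1 := by
  refine le_trans (totalDegree_add _ _) ?_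
  rw [max_le_iff]
  exact ⟨by simp [totalDegree_X], by rw [totalDegree_C]; omega⟩

lemma prod_Icc_split {a b : ℕ} (h : a ≤ b) (f : ℕ → P2) :
    ∏ i ∈ Finset.Icc a b, f i = f a * ∏ i ∈ Finset.Icc (a+1) b, f i := by
  rw [Finset.Icc_add_one_left_eq_Ioc, ← Finset.Icc_erase_left]
  exact (Finset.mul_prod_erase _ _ (Finset.mem_Icc.2 ⟨le_rfl, h⟩)).symm

lemma prod_lead (s : Finset ℕ) :
    ∃ e : P2, ∏ i ∈ s, w' i = X 1 ^ s.card + e ∧ SDeg s.card e := by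
  induction s using Finset.induction_on with
  | empty => exact ⟨0, by simp, Or.inl rfl⟩
  | @insert a s ha ih =>
      obtain ⟨e, he, hd⟩ := ih
      rw [Finset.prod_insert ha, he, Finset.card_insert_of_notMem ha]
      refine ⟨C ((-1 : ℂ) ^ a * 8) * X 1 ^ s.card + w' a * e, ?_, ?_⟩
      · rw [w']; ring
      · apply SDeg.add
        · right
          refine lt_of_le_of_lt (totalDegree_mul _ _) ?_
          rw [totalDegree_C]
          have := totalDegree_X_pow (R := ℂ) (1 : Fin 2) s.card
          omega
        · have : SDeg (s.card + 1) (e * w' a) := SDeg.mul_le hd (td_w' a)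
          rwa [mul_comm e] at this

/-- the auxiliary elements of the ideal -/
noncomputable def U (r m : ℕ) : P2 := (∏ i ∈ Finset.Icc (m+1) r, w' i) * (Rb m).1

lemma U_top (r : ℕ) : U r r = (Rb r).1 := by
  rw [U, Finset.Icc_eq_empty (by omega), Finset.prod_empty, one_mul]

lemma U_snd (m : ℕ) : U (m+1) m = (Rb (m+1)).2 := by
  rw [U, Finset.Icc_self, Finset.prod_singleton, Rb2_succ, w']

lemma U_rec (r m : ℕ) (h : m + 2 ≤ r) :
    w' (m+2) * U r (m+2) = X 0 * U r (m+1) + C (((m+1 : ℕ) : ℂ) ^ 2) * U r m := by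
  have h1 := prod_Icc_split (a := m+2) (b := r) h w'
  have h2 := prod_Icc_split (a := m+1) (b := r) (by omega) w'
  rw [U, U, U, h2, ← mul_assoc (w' (m+2)), ← h1]
  have h3 : (Rb (m+2)).1 = X 0 * (Rb (m+1)).1
      + C (((m+1 : ℕ) : ℂ) ^ 2) * ((X 1 + C ((-1 : ℂ) ^ (m + 1) * 8)) * (Rb m).1) := by
    rw [Rb1_succ (m+1), Rb2_succ m]
  rw [h3, w']
  ring

lemma mem_U (r : ℕ) : ∀ k m, m + k = r → U r m ∈ Jb r := by
  intro k
  induction k using Nat.strong_induction_on with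
  | _ k ih =>
    intro m hm
    match k with
    | 0 =>
        have : m = r := by omega
        subst this
        rw [U_top]
        exact Ideal.subset_span (by simp)
    | 1 =>
        have : m + 1 = r := by omega
        subst this
        rw [U_snd]
        exact Ideal.subset_span (by simp)
    | (k+2) =>
        have h2 : m + 2 ≤ r := by omega
        have hrec := U_rec r m h2
        have hm1 : U r (m+1) ∈ Jb r := ih (k+1) (by omega) (m+1) (by omega)
        have hm2 : U r (m+2) ∈ Jb r := ih k (by omega) (m+2) (by omega)
        have hmem : C (((m+1 : ℕ) : ℂ) ^ 2) * U r m ∈ Jb r := by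
          have : C (((m+1 : ℕ) : ℂ) ^ 2) * U r m
              = w' (m+2) * U r (m+2) - X 0 * U r (m+1) := by
            rw [hrec]; ring
          rw [this]
          exact Ideal.sub_mem _ (Ideal.mul_mem_left _ _ hm2) (Ideal.mul_mem_left _ _ hm1)
        have hc : (((m+1 : ℕ) : ℂ) ^ 2) ≠ 0 := by
          exact pow_ne_zero _ (Nat.cast_ne_zero.2 (by omega))
        have : U r m = C ((((m+1 : ℕ) : ℂ) ^ 2)⁻¹) * (C (((m+1 : ℕ) : ℂ) ^ 2) * U r m) := by
          rw [← mul_assoc, ← map_mul, inv_mul_cancel₀ hc, map_one, one_mul]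
        rw [this]
        exact Ideal.mul_mem_left _ _ hmem

lemma SDeg.td_le {n : ℕ} {p : P2} (h : SDeg n p) : p.totalDegree ≤ n := by
  rcases h with rfl | h
  · simp
  · omega

lemma U_lead (r m : ℕ) (h : m ≤ r) :
    ∃ e : P2, U r m = X 0 ^ m * X 1 ^ (r - m) + e ∧ SDeg r e := by
  obtain ⟨e1, hW, hd1⟩ := prod_lead (Finset.Icc (m+1) r)
  have hcard : (Finset.Icc (m+1) r).card = r - m := by
    rw [Nat.card_Icc]; omega
  rw [hcard] at hW hd1
  obtain ⟨e2, hR, hd2⟩ := Rb1_lead m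
  refine ⟨X 1 ^ (r - m) * e2 + e1 * X 0 ^ m + e1 * e2, ?_, ?_⟩
  · rw [U, hW, hR]; ring
  · apply SDeg.add
    apply SDeg.add
    · have : SDeg (m + (r - m)) (e2 * X 1 ^ (r-m)) :=
        SDeg.mul_le hd2 (le_of_eq (totalDegree_X_pow _ _))
      rw [mul_comm] at this
      exact this.mono (by omega)
    · have : SDeg ((r - m) + m) (e1 * X 0 ^ m) :=
        SDeg.mul_le hd1 (le_of_eq (totalDegree_X_pow _ _))
      exact this.mono (by omega)
    · have : SDeg ((r - m) + m) (e1 * e2) := SDeg.mul_le hd1 hd2.td_le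
      exact this.mono (by omega)

end Aux

namespace Aux

lemma dsum (d : Fin 2 →₀ ℕ) : (d.sum fun _ e => e) = d 0 + d 1 := by
  rw [Finsupp.sum_fintype _ _ (fun _ => rfl), Fin.sum_univ_two]

lemma mono_eq (d : Fin 2 →₀ ℕ) (c : ℂ) :
    (monomial d c : P2) = C c * (X 0 ^ d 0 * X 1 ^ d 1) := by
  rw [monomial_eq, Finsupp.prod_fintype _ _ (fun _ => pow_zero _), Fin.prod_univ_two]

lemma reduce_mono (r a b : ℕ) (hr : 1 ≤ r) (h : r ≤ a + b) :
    ∃ e : P2, SDeg (a + b) e ∧ (X 0 ^ a * X 1 ^ b : P2) - e ∈ Jb r := by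
  set m := min a r with hm
  have hma : m ≤ a := min_le_left _ _
  have hmr : m ≤ r := min_le_right _ _
  have hrb : r - m ≤ b := by omega
  obtain ⟨e, hU, hd⟩ := U_lead r m hmr
  refine ⟨-(X 0 ^ (a - m) * X 1 ^ (b - (r - m)) * e), ?_, ?_⟩
  · have h1 : (X 0 ^ (a - m) * X 1 ^ (b - (r - m)) : P2).totalDegree
        ≤ (a - m) + (b - (r - m)) := by
      refine le_trans (totalDegree_mul _ _) ?_
      rw [totalDegree_X_pow, totalDegree_X_pow]
    have h2 : SDeg (r + ((a - m) + (b - (r - m))))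
        (e * (X 0 ^ (a - m) * X 1 ^ (b - (r - m)))) := SDeg.mul_le hd h1
    rw [mul_comm] at h2
    have h3 := h2.mono (n' := a + b) (by omega)
    rcases h3 with h3 | h3
    · left; rw [h3, neg_zero]
    · right; rwa [totalDegree_neg]
  · have hmem : X 0 ^ (a - m) * X 1 ^ (b - (r - m)) * U r m ∈ Jb r :=
      Ideal.mul_mem_left _ _ (mem_U r (r - m) m (by omega))
    have heq : (X 0 ^ a * X 1 ^ b : P2) - -(X 0 ^ (a - m) * X 1 ^ (b - (r - m)) * e)
        = X 0 ^ (a - m) * X 1 ^ (b - (r - m)) * U r m := by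
      rw [hU]
      have ha' : a = (a - m) + m := by omega
      have hb' : b = (b - (r - m)) + (r - m) := by omega
      calc (X 0 ^ a * X 1 ^ b : P2) - -(X 0 ^ (a - m) * X 1 ^ (b - (r - m)) * e)
          = X 0 ^ ((a - m) + m) * X 1 ^ ((b - (r - m)) + (r - m))
            + X 0 ^ (a - m) * X 1 ^ (b - (r - m)) * e := by rw [← ha', ← hb']; ring
        _ = _ := by rw [pow_add, pow_add]; ring
    rw [heq]
    exact hmem

lemma smul_mk (r : ℕ) (c : ℂ) (q : P2) :
    Ideal.Quotient.mk (Jb r) (C c * q) = c • Ideal.Quotient.mk (Jb r) q := by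
  rw [← Ideal.Quotient.mkₐ_eq_mk ℂ, ← smul_eq_C_mul, map_smul]

lemma span_aux (r : ℕ) (hr : 1 ≤ r) : ∀ n (p : P2), p.totalDegree ≤ n →
    Ideal.Quotient.mk (Jb r) p ∈ Submodule.span ℂ (Set.range
      (fun t : {t : ℕ × ℕ // t.1 + t.2 < r} =>
        Ideal.Quotient.mk (Jb r) (X 0 ^ t.1.1 * X 1 ^ t.1.2))) := by
  intro n
  induction n using Nat.strong_induction_on with
  | _ n ih =>
    intro p hp
    rw [← support_sum_monomial_coeff p, map_sum]
    refine Submodule.sum_mem _ (fun d hd => ?_)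
    have hdn : d 0 + d 1 ≤ n := by
      have := le_totalDegree (p := p) hd
      rw [dsum] at this
      omega
    rw [mono_eq, smul_mk]
    refine Submodule.smul_mem _ _ ?_
    by_cases hcase : d 0 + d 1 < r
    · exact Submodule.subset_span ⟨⟨(d 0, d 1), hcase⟩, rfl⟩
    · push_neg at hcase
      obtain ⟨e, hsd, hmem⟩ := reduce_mono r (d 0) (d 1) hr hcase
      have heq : Ideal.Quotient.mk (Jb r) (X 0 ^ d 0 * X 1 ^ d 1)
          = Ideal.Quotient.mk (Jb r) e := by
        rwa [Ideal.Quotient.mk_eq_mk_iff_sub_mem]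
      rw [heq]
      rcases hsd with rfl | hlt
      · simp
      · exact ih e.totalDegree (by omega) e le_rfl

end Aux

namespace Aux

lemma td_w_mul (k : ℂ) (q : P2) (hq : q ≠ 0) :
    q.totalDegree + 1 ≤ ((X 1 + C k) * q).totalDegree := by
  obtain ⟨d, hd, hdeq⟩ := Finset.exists_mem_eq_sup q.support
    (support_nonempty.mpr hq) (fun s => s.sum fun _ e => e)
  have htd : q.totalDegree = d.sum fun _ e => e := hdeq
  set D : Fin 2 →₀ ℕ := Finsupp.single 1 1 + d with hD
  have hDsum : (D.sum fun _ e => e) = q.totalDegree + 1 := by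
    rw [dsum, hD, htd, dsum]
    simp [Finsupp.add_apply, Finsupp.single_eq_of_ne (by decide : (1 : Fin 2) ≠ 0)]
    omega
  have hcoeffD : coeff D q = 0 := by
    apply coeff_eq_zero_of_totalDegree_lt
    have : (∑ i ∈ D.support, D i) = D.sum fun _ e => e := rfl
    rw [this, hDsum]
    omega
  have hco : coeff D ((X 1 + C k) * q) = coeff d q := by
    rw [add_mul, coeff_add, coeff_C_mul, hcoeffD, mul_zero, add_zero, hD, coeff_X_mul]
  have hne : coeff D ((X 1 + C k) * q) ≠ 0 := by
    rw [hco]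
    exact mem_support_iff.mp hd
  have := le_totalDegree (mem_support_iff.mpr hne)
  omega

lemma deg_eps_le (c : ℂ) (p : P2) :
    (aeval ![Polynomial.X, Polynomial.C c] p).degree ≤ (p.totalDegree : WithBot ℕ) := by
  conv_lhs => rw [← support_sum_monomial_coeff p]
  rw [map_sum]
  refine le_trans (Polynomial.degree_sum_le _ _) ?_
  refine Finset.sup_le (fun d hd => ?_)
  have h1 : d 0 ≤ p.totalDegree := by
    have := le_totalDegree (p := p) hd
    rw [dsum] at this
    omega
  rw [mono_eq, map_mul, map_mul, map_pow, map_pow, aeval_X, aeval_X, aeval_C]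
  simp only [Matrix.cons_val_zero, Matrix.cons_val_one, Matrix.head_cons]
  refine le_trans (Polynomial.degree_mul_le _ _) ?_
  refine le_trans (add_le_add le_rfl (Polynomial.degree_mul_le _ _)) ?_
  have e1 : (algebraMap ℂ (Polynomial ℂ) (coeff d p)).degree ≤ 0 := Polynomial.degree_C_le
  have e2 : (Polynomial.X ^ (d 0) : Polynomial ℂ).degree ≤ (d 0 : WithBot ℕ) :=
    le_of_eq (Polynomial.degree_X_pow _)
  have e3 : ((Polynomial.C c) ^ (d 1) : Polynomial ℂ).degree ≤ 0 := by
    rw [← Polynomial.C_pow]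
    exact Polynomial.degree_C_le
  calc (algebraMap ℂ (Polynomial ℂ) (coeff d p)).degree
        + ((Polynomial.X ^ (d 0) : Polynomial ℂ).degree + ((Polynomial.C c) ^ (d 1)).degree)
      ≤ 0 + ((d 0 : WithBot ℕ) + 0) := add_le_add e1 (add_le_add e2 e3)
    _ = (d 0 : WithBot ℕ) := by rw [zero_add, add_zero]
    _ ≤ (p.totalDegree : WithBot ℕ) := by exact_mod_cast h1

end Aux

namespace Aux

lemma degCmul (a : ℂ) (p : Polynomial ℂ) : (Polynomial.C a * p).degree ≤ p.degree := by
  refine le_trans (Polynomial.degree_mul_le _ _) ?_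
  calc Polynomial.degree (Polynomial.C a) + p.degree ≤ 0 + p.degree :=
        add_le_add Polynomial.degree_C_le le_rfl
    _ = p.degree := zero_add _

lemma eps_Rb (c : ℂ) (m : ℕ) :
    (aeval ![Polynomial.X, Polynomial.C c] (Rb m).1).Monic ∧
    (aeval ![Polynomial.X, Polynomial.C c] (Rb m).1).degree = (m : WithBot ℕ) ∧
    (aeval ![Polynomial.X, Polynomial.C c] (Rb m).2).degree < (m : WithBot ℕ) := by
  induction m with
  | zero =>
      refine ⟨?_, ?_, ?_⟩
      · show (aeval ![Polynomial.X, Polynomial.C c] (1 : P2)).Monic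
        rw [map_one]
        exact Polynomial.monic_one
      · show (aeval ![Polynomial.X, Polynomial.C c] (1 : P2)).degree = _
        rw [map_one, Polynomial.degree_one]
        rfl
      · show (aeval ![Polynomial.X, Polynomial.C c] (0 : P2)).degree < _
        rw [map_zero, Polynomial.degree_zero]
        exact WithBot.bot_lt_coe 0
  | succ m ih =>
      obtain ⟨hmo, hdeg, hdeg2⟩ := ih
      have hXq : (Polynomial.X * aeval ![Polynomial.X, Polynomial.C c] (Rb m).1).degree
          = ((m + 1 : ℕ) : WithBot ℕ) := by
        rw [Polynomial.degree_mul, Polynomial.degree_X, hdeg]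
        push_cast
        ring
      have hsmall : (algebraMap ℂ (Polynomial ℂ) ((m : ℂ)^2)
          * aeval ![Polynomial.X, Polynomial.C c] (Rb m).2).degree < ((m+1 : ℕ) : WithBot ℕ) := by
        rw [Polynomial.algebraMap_eq]
        refine lt_of_le_of_lt (degCmul _ _) ?_
        refine lt_of_lt_of_le hdeg2 ?_
        exact_mod_cast Nat.le_succ m
      have heq1 : aeval ![Polynomial.X, Polynomial.C c] (Rb (m+1)).1
          = Polynomial.X * aeval ![Polynomial.X, Polynomial.C c] (Rb m).1
            + algebraMap ℂ (Polynomial ℂ) ((m : ℂ)^2)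
              * aeval ![Polynomial.X, Polynomial.C c] (Rb m).2 := by
        rw [Rb1_succ, map_add, map_mul, map_mul, aeval_X, aeval_C]
        simp
      refine ⟨?_, ?_, ?_⟩
      · rw [heq1]
        refine Polynomial.Monic.add_of_left (Polynomial.monic_X.mul hmo) ?_
        rw [hXq]
        exact hsmall
      · rw [heq1, Polynomial.degree_add_eq_left_of_degree_lt (by rw [hXq]; exact hsmall), hXq]
      · rw [Rb2_succ, map_mul, map_add, aeval_X, aeval_C]
        simp only [Matrix.cons_val_one, Matrix.head_cons, Matrix.cons_val_zero]
        have : (Polynomial.C c + algebraMap ℂ (Polynomial ℂ) ((-1 : ℂ) ^ (m + 1) * 8))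
            = Polynomial.C (c + (-1 : ℂ) ^ (m + 1) * 8) := by
          rw [map_add]
          rfl
        rw [this]
        refine lt_of_le_of_lt (degCmul _ _) ?_
        rw [hdeg]
        exact_mod_cast Nat.lt_succ_self m

lemma dvd_sub_eps (c : ℂ) (f : P2) :
    (X 1 - C c : P2) ∣
      f - Polynomial.aeval (X 0 : P2) (aeval ![Polynomial.X, Polynomial.C c] f) := by
  induction f using MvPolynomial.induction_on with
  | C a =>
      have : (Polynomial.aeval (X 0 : P2))
          (aeval ![Polynomial.X, Polynomial.C c] (C a : P2)) = C a := by
        rw [aeval_C, Polynomial.algebraMap_eq, Polynomial.aeval_C]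
        rfl
      rw [this, sub_self]
      exact dvd_zero _
  | add p q hp hq =>
      have : p + q - Polynomial.aeval (X 0 : P2) (aeval ![Polynomial.X, Polynomial.C c] (p + q))
          = (p - Polynomial.aeval (X 0 : P2) (aeval ![Polynomial.X, Polynomial.C c] p))
            + (q - Polynomial.aeval (X 0 : P2) (aeval ![Polynomial.X, Polynomial.C c] q)) := by
        rw [map_add, map_add]
        ring
      rw [this]
      exact dvd_add hp hq
  | mul_X p i hp =>
      have hexp : p * X i - Polynomial.aeval (X 0 : P2)
            (aeval ![Polynomial.X, Polynomial.C c] (p * X i))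
          = (p - Polynomial.aeval (X 0 : P2) (aeval ![Polynomial.X, Polynomial.C c] p)) * X i
            + Polynomial.aeval (X 0 : P2) (aeval ![Polynomial.X, Polynomial.C c] p)
              * (X i - Polynomial.aeval (X 0 : P2)
                  (aeval ![Polynomial.X, Polynomial.C c] (X i : P2))) := by
        rw [map_mul, map_mul]
        ring
      rw [hexp]
      refine dvd_add (hp.mul_right _) ?_
      fin_cases i <;> beta_reduce <;> simp only [Fin.zero_eta, Fin.mk_one]
      · have : (X (0 : Fin 2) : P2) - Polynomial.aeval (X 0 : P2)
            (aeval ![Polynomial.X, Polynomial.C c] (X (0 : Fin 2) : P2)) = 0 := by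
          rw [aeval_X]
          simp
        rw [this, mul_zero]
        exact dvd_zero _
      · have : (X (1 : Fin 2) : P2) - Polynomial.aeval (X 0 : P2)
            (aeval ![Polynomial.X, Polynomial.C c] (X (1 : Fin 2) : P2)) = X 1 - C c := by
          rw [aeval_X]
          simp [Polynomial.aeval_C]
        rw [this]
        exact dvd_mul_left _ _

end Aux

namespace Aux

lemma key (r : ℕ) : ∀ p ∈ Jb r, p.totalDegree < r → p = 0 := by
  induction r with
  | zero => intro p _ h; omega
  | succ r ihr =>
    intro p hp hd
    set k : ℂ := (-1 : ℂ) ^ (r + 1) * 8 with hk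
    set c : ℂ := -k with hc
    set ev : P2 →ₐ[ℂ] Polynomial ℂ := aeval ![Polynomial.X, Polynomial.C c] with hev
    obtain ⟨f, g, hfg⟩ := Ideal.mem_span_pair.mp hp
    have h2 : ev (Rb (r+1)).2 = 0 := by
      rw [Rb2_succ, map_mul, hev, map_add, aeval_X, aeval_C]
      simp only [Matrix.cons_val_one, Matrix.head_cons, Matrix.cons_val_zero]
      have : (Polynomial.C c + algebraMap ℂ (Polynomial ℂ) ((-1 : ℂ) ^ (r+1) * 8)) = 0 := by
        rw [Polynomial.algebraMap_eq, ← map_add, hc, hk, neg_add_cancel, map_zero]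
      rw [this, zero_mul]
    obtain ⟨hmo, hdeg, -⟩ := eps_Rb c (r+1)
    have hevp : ev p = ev f * ev (Rb (r+1)).1 := by
      rw [← hfg, map_add, map_mul, map_mul, h2, mul_zero, add_zero]
    have hevf : ev f = 0 := by
      by_contra hne
      have hdmul : (ev f * ev (Rb (r+1)).1).degree = (ev f).degree + ((r+1 : ℕ) : WithBot ℕ) := by
        rw [Polynomial.degree_mul, hdeg]
      have hge : ((r+1 : ℕ) : WithBot ℕ) ≤ (ev p).degree := by
        rw [hevp, hdmul]
        calc ((r+1 : ℕ) : WithBot ℕ) = 0 + ((r+1 : ℕ) : WithBot ℕ) := (zero_add _).symm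
          _ ≤ (ev f).degree + ((r+1 : ℕ) : WithBot ℕ) :=
              add_le_add (Polynomial.zero_le_degree_iff.mpr hne) le_rfl
      have hle : (ev p).degree ≤ (p.totalDegree : WithBot ℕ) := deg_eps_le c p
      have : ((r+1 : ℕ) : WithBot ℕ) ≤ (p.totalDegree : WithBot ℕ) := le_trans hge hle
      have : r + 1 ≤ p.totalDegree := by exact_mod_cast this
      omega
    obtain ⟨f₁, hf₁⟩ := dvd_sub_eps c f
    rw [hevf, map_zero, sub_zero] at hf₁
    have hw : (X 1 - C c : P2) = X 1 + C k := by
      rw [hc, map_neg, sub_neg_eq_add]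
    set p₁ : P2 := f₁ * (Rb (r+1)).1 + g * (Rb r).1 with hp₁
    have hp₁mem : p₁ ∈ Jb r := by
      refine Ideal.add_mem _ ?_ (Ideal.mul_mem_left _ _ (Ideal.subset_span (by simp)))
      refine Ideal.mul_mem_left _ _ ?_
      rw [Rb1_succ]
      exact Ideal.add_mem _ (Ideal.mul_mem_left _ _ (Ideal.subset_span (by simp)))
        (Ideal.mul_mem_left _ _ (Ideal.subset_span (by simp)))
    have hpw : p = (X 1 + C k) * p₁ := by
      rw [← hfg, hf₁, hw, Rb2_succ, hp₁]
      ring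
    rcases eq_or_ne p₁ 0 with h0 | h0
    · rw [hpw, h0, mul_zero]
    · exfalso
      have := td_w_mul k p₁ h0
      rw [← hpw] at this
      have hlt : p₁.totalDegree < r := by omega
      exact h0 (ihr p₁ hp₁mem hlt)

end Aux

namespace Aux

noncomputable def idxS (r : ℕ) : Finset (ℕ × ℕ) :=
  (Finset.range r).biUnion (fun d => Finset.HasAntidiagonal.antidiagonal d)

lemma idxS_mem (r : ℕ) (x : ℕ × ℕ) : x ∈ idxS r ↔ x.1 + x.2 < r := by
  rw [idxS, Finset.mem_biUnion]
  constructor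
  · rintro ⟨d, hd, ha⟩
    rw [Finset.HasAntidiagonal.mem_antidiagonal] at ha
    rw [Finset.mem_range] at hd
    omega
  · intro h
    exact ⟨x.1 + x.2, Finset.mem_range.2 h, Finset.HasAntidiagonal.mem_antidiagonal.2 rfl⟩

noncomputable def idxF (r : ℕ) : Fintype {t : ℕ × ℕ // t.1 + t.2 < r} :=
  Fintype.ofFinset (idxS r) (fun x => idxS_mem r x)

lemma idxS_card (r : ℕ) : (idxS r).card = (r+1).choose 2 := by
  rw [idxS, Finset.card_biUnion]
  · have h1 : ∀ d ∈ Finset.range r, (Finset.HasAntidiagonal.antidiagonal d).card = d + 1 := by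
      intro d _
      exact Finset.Nat.card_antidiagonal d
    rw [Finset.sum_congr rfl h1]
    have h2 : ∑ i ∈ Finset.range (r+1), i = (∑ i ∈ Finset.range r, (i+1)) + 0 :=
      Finset.sum_range_succ' id r
    rw [Nat.choose_two_right]
    simp only [Nat.add_sub_cancel]
    have h3 := Finset.sum_range_id (r+1)
    simp only [Nat.add_sub_cancel] at h3
    omega
  · intro x hx y hy hxy
    rw [Function.onFun, Finset.disjoint_left]
    intro a ha hb
    rw [Finset.HasAntidiagonal.mem_antidiagonal] at ha hb
    omega

lemma idx_card (r : ℕ) :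
    @Fintype.card {t : ℕ × ℕ // t.1 + t.2 < r} (idxF r) = (r+1).choose 2 := by
  have h := Fintype.card_ofFinset (p := {t : ℕ × ℕ | t.1 + t.2 < r}) (idxS r)
    (fun x => idxS_mem r x)
  rw [← idxS_card r]
  exact h

lemma indep (r : ℕ) : LinearIndependent ℂ (fun t : {t : ℕ × ℕ // t.1 + t.2 < r} =>
    Ideal.Quotient.mk (Jb r) (X 0 ^ t.1.1 * X 1 ^ t.1.2)) := by
  rcases Nat.eq_zero_or_pos r with rfl | hr
  · haveI : IsEmpty {t : ℕ × ℕ // t.1 + t.2 < 0} := ⟨fun t => by omega⟩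
    exact linearIndependent_empty_type
  · set D : {t : ℕ × ℕ // t.1 + t.2 < r} → (Fin 2 →₀ ℕ) :=
      fun t => Finsupp.single (0 : Fin 2) t.1.1 + Finsupp.single (1 : Fin 2) t.1.2 with hD
    have hinj : Function.Injective D := by
      intro s t h
      have h0 := congrArg (fun d => d (0 : Fin 2)) h
      have h1 := congrArg (fun d => d (1 : Fin 2)) h
      simp only [hD, Finsupp.add_apply, Finsupp.single_eq_same,
        Finsupp.single_eq_of_ne (by decide : (0 : Fin 2) ≠ 1),
        Finsupp.single_eq_of_ne (by decide : (1 : Fin 2) ≠ 0), add_zero, zero_add] at h0 h1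
      exact Subtype.ext (Prod.ext h0 h1)
    have hli : LinearIndependent ℂ (fun t : {t : ℕ × ℕ // t.1 + t.2 < r} =>
        (monomial (D t) (1 : ℂ) : P2)) := by
      have h := ((basisMonomials (Fin 2) ℂ).linearIndependent).comp D hinj
      have hco : (⇑(basisMonomials (Fin 2) ℂ) ∘ D) = fun t => (monomial (D t) (1:ℂ) : P2) := by
        funext t
        rw [Function.comp_apply]
        rw [show ⇑(basisMonomials (Fin 2) ℂ) = fun s => (monomial s (1:ℂ) : P2) from
          coe_basisMonomials (Fin 2) ℂ]
      rwa [hco] at h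
    have hfun : (fun t : {t : ℕ × ℕ // t.1 + t.2 < r} => (X 0 ^ t.1.1 * X 1 ^ t.1.2 : P2))
        = fun t => (monomial (D t) (1 : ℂ) : P2) := by
      funext t
      rw [X_pow_eq_monomial, X_pow_eq_monomial, monomial_mul, one_mul, hD]
    rw [← hfun] at hli
    have hdisj : Disjoint (Submodule.span ℂ (Set.range
          (fun t : {t : ℕ × ℕ // t.1 + t.2 < r} => (X 0 ^ t.1.1 * X 1 ^ t.1.2 : P2))))
        (LinearMap.ker (Ideal.Quotient.mkₐ ℂ (Jb r)).toLinearMap) := by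
      rw [Submodule.disjoint_def]
      intro x hx hker
      have hxdeg : x.totalDegree ≤ r - 1 := by
        have hsub : Submodule.span ℂ (Set.range
            (fun t : {t : ℕ × ℕ // t.1 + t.2 < r} => (X 0 ^ t.1.1 * X 1 ^ t.1.2 : P2)))
            ≤ restrictTotalDegree (Fin 2) ℂ (r - 1) := by
          rw [Submodule.span_le]
          rintro _ ⟨t, rfl⟩
          rw [SetLike.mem_coe, mem_restrictTotalDegree]
          refine le_trans (totalDegree_mul _ _) ?_
          rw [totalDegree_X_pow, totalDegree_X_pow]
          have := t.2
          omega
        exact (mem_restrictTotalDegree _ _ _).mp (hsub hx)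
      have hxJ : x ∈ Jb r := by
        rw [LinearMap.mem_ker] at hker
        have : Ideal.Quotient.mk (Jb r) x = 0 := by
          rw [← Ideal.Quotient.mkₐ_eq_mk ℂ]
          exact hker
        exact (Ideal.Quotient.eq_zero_iff_mem).mp this
      exact key r x hxJ (by omega)
    have := hli.map hdisj
    have hcomp : ((Ideal.Quotient.mkₐ ℂ (Jb r)).toLinearMap ∘
        fun t : {t : ℕ × ℕ // t.1 + t.2 < r} => (X 0 ^ t.1.1 * X 1 ^ t.1.2 : P2))
        = fun t : {t : ℕ × ℕ // t.1 + t.2 < r} =>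
            Ideal.Quotient.mk (Jb r) (X 0 ^ t.1.1 * X 1 ^ t.1.2) := by
      funext t
      simp [Ideal.Quotient.mkₐ_eq_mk]
    rwa [hcomp] at this

lemma span_top (r : ℕ) : Submodule.span ℂ (Set.range
    (fun t : {t : ℕ × ℕ // t.1 + t.2 < r} =>
      Ideal.Quotient.mk (Jb r) (X 0 ^ t.1.1 * X 1 ^ t.1.2))) = ⊤ := by
  rcases Nat.eq_zero_or_pos r with rfl | hr
  · have htop : Jb 0 = ⊤ := by
      rw [Jb, Ideal.eq_top_iff_one]
      exact Ideal.subset_span (by simp [Rb])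
    haveI : Subsingleton (P2 ⧸ Jb 0) := Ideal.Quotient.subsingleton_iff.mpr htop
    exact Subsingleton.elim _ _
  · rw [Submodule.eq_top_iff']
    intro x
    obtain ⟨p, rfl⟩ := Ideal.Quotient.mk_surjective x
    exact span_aux r hr p.totalDegree p le_rfl

end Aux

/-- For every r ≥ 0, the residue classes of the monomials α^a·β^b with a + b < r form a
ℂ-vector-space basis of F̄_r = ℂ[α,β]/J̄_r; in particular
dim_ℂ F̄_r = binom(r+1, 2) = r(r+1)/2. -/
theorem stmt2 (r : ℕ) :
    LinearIndependent ℂ (fun t : {t : ℕ × ℕ // t.1 + t.2 < r} =>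
      Ideal.Quotient.mk (Jb r) (X 0 ^ t.1.1 * X 1 ^ t.1.2)) ∧
    Submodule.span ℂ (Set.range (fun t : {t : ℕ × ℕ // t.1 + t.2 < r} =>
      Ideal.Quotient.mk (Jb r) (X 0 ^ t.1.1 * X 1 ^ t.1.2))) = ⊤ ∧
    Module.finrank ℂ (MvPolynomial (Fin 2) ℂ ⧸ Jb r) = (r + 1).choose 2 ∧
    (r + 1).choose 2 = r * (r + 1) / 2 := by
  refine ⟨Aux.indep r, Aux.span_top r, ?_, ?_⟩
  · letI := Aux.idxF r
    have hb : Module.Basis {t : ℕ × ℕ // t.1 + t.2 < r} ℂ (MvPolynomial (Fin 2) ℂ ⧸ Jb r) :=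
      Module.Basis.mk (Aux.indep r) (le_of_eq (Aux.span_top r).symm)
    exact (Module.finrank_eq_card_basis hb).trans (Aux.idx_card r)
  · rw [Nat.choose_two_right, Nat.add_sub_cancel, Nat.mul_comm]
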